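/- For every positive integer n, the alternating sum ∑_{k=0}^{n-1} (-1)^k * (1/n) * C(n-1+k, n-1) * C(2n-k, n+1) equals (1/(2m+1)) * C(3m, m) if n = 2m is even, and equals (1/(2m+1)) * C(3m+1, m+1) if n = 2m+1 is odd. -/

import Mathlib

open Finset Polynomial

-- swap lemma: ∑_{k<K} ∑_{i≤k} f i k = ∑_{i<K} ∑_{k∈Ico i K} f i k
lemma swap_sum {M : Type*} [AddCommMonoid M] (K : ℕ) (f : ℕ → ℕ → M) :
    ∑ k ∈ range K, ∑ i ∈ range (k+1), f i k
      = ∑ i ∈ range K, ∑ k ∈ Ico i K, f i k := by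
  rw [Finset.sum_sigma', Finset.sum_sigma']
  apply Finset.sum_nbij' (fun p => ⟨p.2, p.1⟩) (fun p => ⟨p.2, p.1⟩) <;>
    simp +contextual [Finset.mem_sigma, Nat.lt_succ_iff, Nat.lt_of_le_of_lt] <;>
    omega

lemma lemmaH {R : Type*} [CommRing R] (m : ℕ) (K : ℕ) (hK : 1 ≤ K) (u v : R) :
    ∃ E : R, (u - v)^(m+1) * ∑ k ∈ range K, (Nat.choose (m+k) k : R) * v^k * u^(K-1-k)
      = u^(m+K) - v^K * E := by
  induction m with
  | zero =>
    refine ⟨1, ?_⟩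
    have h := geom_sum₂_mul v u K
    have hs : ∑ k ∈ range K, (Nat.choose (0+k) k : R) * v^k * u^(K-1-k)
        = ∑ k ∈ range K, v^k * u^(K-1-k) := by
      apply Finset.sum_congr rfl; intro k hk; simp [Nat.zero_add]
    rw [hs, pow_one, mul_one]
    calc (u - v) * ∑ k ∈ range K, v^k * u^(K-1-k)
        = -((∑ i ∈ range K, v ^ i * u ^ (K - 1 - i)) * (v - u)) := by ring
      _ = u ^ K - v ^ K := by rw [h]; ring
      _ = u ^ (0+K) - v ^ K := by rw [Nat.zero_add]
  | succ m ih =>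
    obtain ⟨E, hE⟩ := ih
    refine ⟨u * E + (∑ i ∈ range K, (Nat.choose (m+i) i : R)) * (u-v)^(m+1), ?_⟩
    have hockey : ∀ k : ℕ, (Nat.choose (m+1+k) k : R)
        = ∑ i ∈ range (k+1), (Nat.choose (m+i) i : R) := by
      intro k
      have h1 : ∑ i ∈ range (k+1), Nat.choose (m+i) i = Nat.choose (m+1+k) k := by
        have hsy : ∀ i : ℕ, Nat.choose (m+i) i = Nat.choose (m+i) m := by
          intro i
          have h := Nat.choose_symm (Nat.le_add_right m i)
          rwa [Nat.add_sub_cancel_left] at h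
        have h2 : ∑ i ∈ range (k+1), Nat.choose (m+i) i
            = ∑ j ∈ Icc m (m+k), Nat.choose j m := by
          rw [← Finset.Ico_add_one_right_eq_Icc, Finset.sum_Ico_eq_sum_range]
          have : m + k + 1 - m = k + 1 := by omega
          rw [this]
          exact Finset.sum_congr rfl fun i _ => hsy i
        rw [h2, Nat.sum_Icc_choose]
        have h3 := Nat.choose_symm (show m+1 ≤ m+1+k from Nat.le_add_right _ k)
        rw [Nat.add_sub_cancel_left] at h3
        have h4 : m + k + 1 = m + 1 + k := by omega
        rw [h4]
        exact h3.symm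
      rw [← h1]; push_cast; ring
    have key : (u - v) * ∑ k ∈ range K, (Nat.choose (m+1+k) k : R) * v^k * u^(K-1-k)
        = u * (∑ k ∈ range K, (Nat.choose (m+k) k : R) * v^k * u^(K-1-k))
          - (∑ i ∈ range K, (Nat.choose (m+i) i : R)) * v^K := by
      have step1 : ∑ k ∈ range K, (Nat.choose (m+1+k) k : R) * v^k * u^(K-1-k)
          = ∑ i ∈ range K, ∑ k ∈ Ico i K, (Nat.choose (m+i) i : R) * (v^k * u^(K-1-k)) := by
        rw [← swap_sum]
        apply Finset.sum_congr rfl; intro k hk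
        rw [hockey k, Finset.sum_mul, Finset.sum_mul]
        apply Finset.sum_congr rfl; intro i hi; ring
      have inner : ∀ i ∈ range K, (u - v) * ∑ k ∈ Ico i K, v^k * u^(K-1-k)
          = v^i * u^(K-i) - v^K := by
        intro i hi
        rw [Finset.mem_range] at hi
        rw [Finset.sum_Ico_eq_sum_range]
        have e1 : ∀ t, v^(i+t) * u^(K-1-(i+t)) = v^i * (v^t * u^((K-i)-1-t)) := by
          intro t
          have : K-1-(i+t) = (K-i)-1-t := by omega
          rw [this, pow_add]; ring
        rw [Finset.sum_congr rfl (fun t _ => e1 t), ← Finset.mul_sum]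
        have h2 := geom_sum₂_mul v u (K-i)
        have h3 : v^i * v^(K-i) = v^K := by rw [← pow_add]; congr 1; omega
        calc (u-v) * (v^i * ∑ t ∈ range (K-i), v^t * u^((K-i)-1-t))
            = v^i * (-((∑ t ∈ range (K-i), v^t * u^((K-i)-1-t)) * (v - u))) := by ring
          _ = v^i * (u^(K-i) - v^(K-i)) := by rw [h2]; ring
          _ = v^i * u^(K-i) - v^K := by rw [mul_sub, h3]
      calc (u - v) * ∑ k ∈ range K, (Nat.choose (m+1+k) k : R) * v^k * u^(K-1-k)
          = ∑ i ∈ range K, (Nat.choose (m+i) i : R) *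
              ((u - v) * ∑ k ∈ Ico i K, v^k * u^(K-1-k)) := by
            rw [step1, Finset.mul_sum]
            apply Finset.sum_congr rfl; intro i hi
            rw [Finset.mul_sum, Finset.mul_sum, Finset.mul_sum]
            apply Finset.sum_congr rfl; intro k hk; ring
        _ = ∑ i ∈ range K, (Nat.choose (m+i) i : R) * (v^i * u^(K-i) - v^K) := by
            apply Finset.sum_congr rfl; intro i hi; rw [inner i hi]
        _ = u * (∑ k ∈ range K, (Nat.choose (m+k) k : R) * v^k * u^(K-1-k))
            - (∑ i ∈ range K, (Nat.choose (m+i) i : R)) * v^K := by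
            rw [Finset.mul_sum, Finset.sum_mul, ← Finset.sum_sub_distrib]
            apply Finset.sum_congr rfl; intro i hi
            rw [Finset.mem_range] at hi
            have : u^(K-i) = u * u^(K-1-i) := by
              rw [← pow_succ']; congr 1; omega
            rw [this]; ring
    calc (u-v)^(m+1+1) * ∑ k ∈ range K, (Nat.choose (m+1+k) k : R) * v^k * u^(K-1-k)
        = (u-v)^(m+1) * ((u - v) * ∑ k ∈ range K, (Nat.choose (m+1+k) k : R) * v^k * u^(K-1-k)) := by
          rw [pow_succ]; ring
      _ = (u-v)^(m+1) * (u * (∑ k ∈ range K, (Nat.choose (m+k) k : R) * v^k * u^(K-1-k))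
            - (∑ i ∈ range K, (Nat.choose (m+i) i : R)) * v^K) := by rw [key]
      _ = u * ((u-v)^(m+1) * ∑ k ∈ range K, (Nat.choose (m+k) k : R) * v^k * u^(K-1-k))
            - (∑ i ∈ range K, (Nat.choose (m+i) i : R)) * v^K * (u-v)^(m+1) := by ring
      _ = u * (u^(m+K) - v^K * E)
            - (∑ i ∈ range K, (Nat.choose (m+i) i : R)) * v^K * (u-v)^(m+1) := by rw [hE]
      _ = u^(m+1+K) - v^K * (u * E + (∑ i ∈ range K, (Nat.choose (m+i) i : R)) * (u-v)^(m+1)) := by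
          have hu : u * u^(m+K) = u^(m+1+K) := by
            rw [← pow_succ']
            congr 1
            omega
          rw [← hu]; ring

lemma partA (n : ℕ) (hn : 1 ≤ n) :
    ∑ k ∈ range n, (-1:ℚ)^k * (Nat.choose (n-1+k) k) * (Nat.choose (2*n-k) (n+1))
      = ∑ j ∈ range ((n+1)/2), ((n:ℚ) - 2*j) * (Nat.choose (n-1+j) j) := by
  set J := (n+1)/2 with hJ
  have hJ1 : 1 ≤ J := by rw [hJ]; omega
  have hJn : n ≤ 2*J ∧ 2*J ≤ n+1 := by constructor <;> omega
  -- the two polynomials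
  set P : Polynomial ℚ := ∑ k ∈ range n,
      (Nat.choose (n-1+k) k : Polynomial ℚ) * (-X)^k * (1+X)^(n-1-k) with hP
  set Q : Polynomial ℚ := ∑ j ∈ range J,
      (Nat.choose (n-1+j) j : Polynomial ℚ) * (X^2)^j * ((1+X)^2)^(J-1-j) with hQ
  -- L3 : (1+2X)^n * P = (1+X)^(2n-1) - (-X)^n * E1
  obtain ⟨E1, hE1⟩ := lemmaH (R := Polynomial ℚ) (n-1) n hn (1+X) (-X)
  rw [show n-1+1 = n by omega, show (1+X-(-X) : Polynomial ℚ) = 1+2*X by ring,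
      show n-1+n = 2*n-1 by omega] at hE1
  rw [← hP] at hE1
  -- L4 : (1+2X)^n * Q with u=(1+X)^2, v=X^2
  obtain ⟨E2, hE2⟩ := lemmaH (R := Polynomial ℚ) (n-1) J hJ1 ((1+X)^2) (X^2)
  rw [show n-1+1 = n by omega, show ((1+X)^2-X^2 : Polynomial ℚ) = 1+2*X by ring] at hE2
  rw [← hQ] at hE2
  -- real Q polynomial
  set Qr : Polynomial ℚ := (1+X)^(n+2-2*J) * Q with hQr
  have hE2' : (1+2*X : Polynomial ℚ)^n * Qr
      = (1+X)^(3*n) - X^(2*J) * ((1+X)^(n+2-2*J) * E2) := by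
    rw [hQr]
    calc (1+2*X : Polynomial ℚ)^n * ((1+X)^(n+2-2*J) * Q)
        = (1+X)^(n+2-2*J) * ((1+2*X)^n * Q) := by ring
      _ = (1+X)^(n+2-2*J) * (((1+X)^2)^(n-1+J) - (X^2)^J * E2) := by rw [hE2]
      _ = (1+X)^(n+2-2*J) * (1+X)^(2*(n-1+J)) - X^(2*J) * ((1+X)^(n+2-2*J) * E2) := by
          rw [← pow_mul, ← pow_mul]; ring
      _ = (1+X)^(3*n) - X^(2*J) * ((1+X)^(n+2-2*J) * E2) := by
          rw [← pow_add, show n+2-2*J + 2*(n-1+J) = 3*n by omega]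
  -- divisibility
  have hdvd : (X : Polynomial ℚ)^n ∣ (1+X)^(n+1) * P - Qr := by
    have hcop : IsCoprime ((X : Polynomial ℚ)^n) ((1+2*X)^n) := by
      have : IsCoprime (X : Polynomial ℚ) (1+2*X) := ⟨-2, 1, by ring⟩
      exact this.pow
    apply hcop.dvd_of_dvd_mul_left
    refine ⟨(-1:Polynomial ℚ)^n * ((1+X)^(n+1) * E1) * (-1) + X^(2*J-n) * ((1+X)^(n+2-2*J) * E2), ?_⟩
    have hx1 : ((-X : Polynomial ℚ))^n = (-1)^n * X^n := by rw [neg_pow]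
    have hx2 : (X : Polynomial ℚ)^(2*J) = X^n * X^(2*J-n) := by
      rw [← pow_add, show n + (2*J-n) = 2*J by omega]
    calc (1+2*X : Polynomial ℚ)^n * ((1+X)^(n+1) * P - Qr)
        = (1+X)^(n+1) * ((1+2*X)^n * P) - (1+2*X)^n * Qr := by ring
      _ = (1+X)^(n+1) * ((1+X)^(2*n-1) - (-X)^n * E1)
            - ((1+X)^(3*n) - X^(2*J) * ((1+X)^(n+2-2*J) * E2)) := by rw [hE1, hE2']
      _ = (1+X)^(n+1) * (1+X)^(2*n-1) - (1+X)^(3*n)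
            - (-X)^n * ((1+X)^(n+1) * E1) + X^(2*J) * ((1+X)^(n+2-2*J) * E2) := by ring
      _ = - (-X)^n * ((1+X)^(n+1) * E1) + X^(2*J) * ((1+X)^(n+2-2*J) * E2) := by
          rw [← pow_add, show n+1+(2*n-1) = 3*n by omega]; ring
      _ = X^n * ((-1:Polynomial ℚ)^n * ((1+X)^(n+1) * E1) * (-1)
            + X^(2*J-n) * ((1+X)^(n+2-2*J) * E2)) := by rw [hx1, hx2]; ring
  obtain ⟨G2, hG2⟩ := hdvd
  have hcoeff0 : ((1+X : Polynomial ℚ)^(n+1) * P - Qr).coeff (n-1) = 0 := by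
    rw [hG2, mul_comm, Polynomial.coeff_mul_X_pow']
    simp only [if_neg (by omega : ¬ n ≤ n-1)]
  have hcoeffeq : ((1+X : Polynomial ℚ)^(n+1) * P).coeff (n-1) = Qr.coeff (n-1) := by
    have h := hcoeff0
    rw [Polynomial.coeff_sub, sub_eq_zero] at h
    exact h
  -- L1 : LHS = coeff ((1+X)^(n+1) * P) (n-1)
  have hL1 : ((1+X : Polynomial ℚ)^(n+1) * P).coeff (n-1)
      = ∑ k ∈ range n, (-1:ℚ)^k * (Nat.choose (n-1+k) k) * (Nat.choose (2*n-k) (n+1)) := by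
    rw [hP, Finset.mul_sum, Polynomial.finset_sum_coeff]
    apply Finset.sum_congr rfl
    intro k hk
    rw [Finset.mem_range] at hk
    have h1 : (1+X : Polynomial ℚ)^(n+1) * ((Nat.choose (n-1+k) k : Polynomial ℚ) * (-X)^k * (1+X)^(n-1-k))
        = Polynomial.C ((-1:ℚ)^k * (Nat.choose (n-1+k) k : ℚ)) * (X^k * (1+X)^(2*n-k)) := by
      have hpow : (1+X : Polynomial ℚ)^(n+1) * (1+X)^(n-1-k) = (1+X)^(2*n-k) := by
        rw [← pow_add, show (n+1)+(n-1-k) = 2*n-k by omega]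
      rw [← hpow, neg_pow]
      simp only [map_mul, map_pow, map_neg, map_one, map_natCast]
      ring
    rw [h1, Polynomial.coeff_C_mul]
    have h2 : ((X : Polynomial ℚ)^k * (1+X)^(2*n-k)).coeff (n-1)
        = ((1+X : Polynomial ℚ)^(2*n-k)).coeff (n-1-k) := by
      have h : n-1 = (n-1-k) + k := by omega
      conv_lhs => rw [h]
      rw [Polynomial.coeff_X_pow_mul]
    rw [h2, Polynomial.coeff_one_add_X_pow]
    have h3 : Nat.choose (2*n-k) (n-1-k) = Nat.choose (2*n-k) (n+1) := by
      have hle : n+1 ≤ 2*n-k := by omega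
      have := Nat.choose_symm hle
      rw [show 2*n-k-(n+1) = n-1-k by omega] at this
      exact this
    rw [h3]
  -- L2 : RHS = coeff Qr (n-1)
  have hL2 : Qr.coeff (n-1)
      = ∑ j ∈ range J, ((n:ℚ) - 2*j) * (Nat.choose (n-1+j) j) := by
    rw [hQr, hQ, Finset.mul_sum, Polynomial.finset_sum_coeff]
    apply Finset.sum_congr rfl
    intro j hj
    rw [Finset.mem_range] at hj
    have h2j : 2*j+1 ≤ n := by omega
    have h1 : (1+X : Polynomial ℚ)^(n+2-2*J) * ((Nat.choose (n-1+j) j : Polynomial ℚ) * (X^2)^j * ((1+X)^2)^(J-1-j))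
        = Polynomial.C ((Nat.choose (n-1+j) j : ℚ)) * (X^(2*j) * (1+X)^(n-2*j)) := by
      have hpow : (1+X : Polynomial ℚ)^(n+2-2*J) * (1+X)^(2*(J-1-j)) = (1+X)^(n-2*j) := by
        rw [← pow_add, show n+2-2*J + 2*(J-1-j) = n-2*j by omega]
      rw [show ((X : Polynomial ℚ)^2)^j = X^(2*j) by rw [← pow_mul, mul_comm],
        show (((1+X) : Polynomial ℚ)^2)^(J-1-j) = (1+X)^(2*(J-1-j)) by rw [← pow_mul]]
      rw [← hpow]
      simp only [map_natCast]
      ring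
    rw [h1, Polynomial.coeff_C_mul]
    have h2 : ((X : Polynomial ℚ)^(2*j) * (1+X)^(n-2*j)).coeff (n-1)
        = ((1+X : Polynomial ℚ)^(n-2*j)).coeff (n-1-2*j) := by
      have h : n-1 = (n-1-2*j) + 2*j := by omega
      conv_lhs => rw [h]
      rw [Polynomial.coeff_X_pow_mul]
    rw [h2, Polynomial.coeff_one_add_X_pow]
    have h3 : Nat.choose (n-2*j) (n-1-2*j) = n - 2*j := by
      rw [show n-2*j = (n-1-2*j)+1 by omega, Nat.choose_succ_self_right]
    rw [h3]
    have : ((n - 2*j : ℕ) : ℚ) = (n:ℚ) - 2*j := by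
      push_cast [Nat.cast_sub (by omega : 2*j ≤ n)]
      ring
    rw [this]; ring
  rw [← hL1, ← hL2, hcoeffeq]

lemma partB (n : ℕ) (hn : 1 ≤ n) :
    ∑ j ∈ range ((n+1)/2), ((n:ℚ) - 2*j) * (Nat.choose (n-1+j) j)
      = -(((((n+1)/2 : ℕ)):ℚ) * (2*(((n+1)/2 : ℕ):ℚ) - n - 3) / (n+1)
          * (Nat.choose (n-1+(n+1)/2) ((n+1)/2))) := by
  set J := (n+1)/2 with hJ
  set f : ℕ → ℚ := fun j => (j:ℚ) * (2*(j:ℚ) - n - 3) / (n+1) * (Nat.choose (n-1+j) j) with hf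
  have hne : ((n:ℚ)+1) ≠ 0 := by positivity
  have hterm : ∀ j : ℕ, ((n:ℚ) - 2*j) * (Nat.choose (n-1+j) j) = f j - f (j+1) := by
    intro j
    have hrec : ((j:ℚ)+1) * (Nat.choose (n+j) (j+1)) = ((n:ℚ)+j) * (Nat.choose (n-1+j) j) := by
      have h := Nat.add_one_mul_choose_eq (n-1+j) j
      rw [show n-1+j+1 = n+j by omega] at h
      have h2 : ((n+j : ℕ) * Nat.choose (n-1+j) j : ℚ) = ((Nat.choose (n+j) (j+1) * (j+1) : ℕ) : ℚ) := by
        exact_mod_cast congrArg (Nat.cast : ℕ → ℚ) h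
      push_cast at h2
      linarith
    rw [hf]
    simp only
    rw [show n-1+(j+1) = n+j by omega]
    rw [div_mul_eq_mul_div, div_mul_eq_mul_div, div_sub_div_same, eq_div_iff hne]
    push_cast
    nlinarith [hrec]
  calc ∑ j ∈ range J, ((n:ℚ) - 2*j) * (Nat.choose (n-1+j) j)
      = ∑ j ∈ range J, (f j - f (j+1)) := Finset.sum_congr rfl fun j _ => hterm j
    _ = f 0 - f J := Finset.sum_range_sub' f J
    _ = -(f J) := by rw [hf]; simp
    _ = _ := by rw [hf]

theorem stmt_7 (n m : ℕ) (hn : 0 < n) :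
    (n = 2 * m →
      ∑ k ∈ Finset.range n,
        (-1 : ℚ) ^ k * (1 / n) * (Nat.choose (n - 1 + k) (n - 1)) *
          (Nat.choose (2 * n - k) (n + 1))
        = (1 / (2 * m + 1) : ℚ) * (Nat.choose (3 * m) m)) ∧
    (n = 2 * m + 1 →
      ∑ k ∈ Finset.range n,
        (-1 : ℚ) ^ k * (1 / n) * (Nat.choose (n - 1 + k) (n - 1)) *
          (Nat.choose (2 * n - k) (n + 1))
        = (1 / (2 * m + 1) : ℚ) * (Nat.choose (3 * m + 1) (m + 1))) := by
  have hn1 : 1 ≤ n := hn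
  have hsymm : ∀ k : ℕ, Nat.choose (n-1+k) (n-1) = Nat.choose (n-1+k) k := by
    intro k
    have h := Nat.choose_symm (Nat.le_add_right (n-1) k)
    rw [Nat.add_sub_cancel_left] at h
    exact h.symm
  have hmain : ∑ k ∈ Finset.range n,
      (-1 : ℚ) ^ k * (1 / n) * (Nat.choose (n - 1 + k) (n - 1)) * (Nat.choose (2 * n - k) (n + 1))
      = (1/n) * (-(((((n+1)/2 : ℕ)):ℚ) * (2*(((n+1)/2 : ℕ):ℚ) - n - 3) / (n+1)
          * (Nat.choose (n-1+(n+1)/2) ((n+1)/2)))) := by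
    rw [← partB n hn1, ← partA n hn1, Finset.mul_sum]
    apply Finset.sum_congr rfl
    intro k _
    rw [hsymm k]
    ring
  constructor
  · rintro rfl
    have hm1 : 1 ≤ m := by omega
    rw [hmain]
    rw [show (2*m+1)/2 = m by omega, show 2*m-1+m = 3*m-1 by omega]
    -- need: (1/(2m)) * -(m * (2m - 2m - 3)/(2m+1) * C(3m-1,m)) = 1/(2m+1) * C(3m,m)
    have hkey : (3*m : ℚ) * (Nat.choose (3*m-1) m) = (2*m : ℚ) * (Nat.choose (3*m) m) := by
      have h1 := Nat.add_one_mul_choose_eq (3*m-1) m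
      rw [show 3*m-1+1 = 3*m by omega] at h1
      have h2 := Nat.choose_succ_right_eq (3*m) m
      rw [show 3*m - m = 2*m by omega] at h2
      have : 3*m * Nat.choose (3*m-1) m = 2*m * Nat.choose (3*m) m := by rw [h1, h2]; ring
      exact_mod_cast congrArg (Nat.cast : ℕ → ℚ) this
    have hm0 : ((m:ℚ)) ≠ 0 := by positivity
    have h2m1 : ((2*m+1 : ℚ)) ≠ 0 := by positivity
    push_cast
    push_cast at hkey
    field_simp
    have hk2 : (3:ℚ) * (Nat.choose (3*m-1) m) = 2 * (Nat.choose (3*m) m) :=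
      mul_left_cancel₀ hm0 (by linarith [hkey])
    linarith [hk2]
  · rintro rfl
    rw [hmain]
    rw [show (2*m+1+1)/2 = m+1 by omega, show 2*m+1-1+(m+1) = 3*m+1 by omega]
    have h2m1 : ((2*m+1 : ℚ)) ≠ 0 := by positivity
    push_cast
    field_simp
    ring
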